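/- Let A be a real n×n matrix, let λ ≥ 0 and ε > 0, and let P be a real symmetric n×n matrix with inertia p such that AᵀP + PA ⪯ −2λP − εI. Then the cone K⁺ = { x ∈ ℝⁿ : xᵀPx ≥ 0 } is backward invariant and strictly contracted under the backward linear flow: for every t ≥ 0 and every x with xᵀPx ≥ 0 one has (exp(−At)x)ᵀP(exp(−At)x) ≥ 0, and for every t > 0 and every x ≠ 0 with xᵀPx ≥ 0 one has (exp(−At)x)ᵀP(exp(−At)x) > 0. -/

import Mathlib

open Matrix

/-- `M ⪯ N` iff `N - M` is positive semidefinite. -/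
def matLE {m : Type*} [Fintype m] (M N : Matrix m m ℝ) : Prop := (N - M).PosSemidef

/-- A real symmetric matrix has inertia `p`: exactly `p` negative eigenvalues,
`card m − p` positive eigenvalues, and no zero eigenvalues, counted with multiplicity
(as roots of the characteristic polynomial). -/
def hasInertia {m : Type*} [Fintype m] [DecidableEq m]
    (P : Matrix m m ℝ) (p : ℕ) : Prop :=
  Multiset.countP (fun μ : ℝ => μ < 0) P.charpoly.roots = p ∧
  Multiset.countP (fun μ : ℝ => 0 < μ) P.charpoly.roots = Fintype.card m - p ∧
  (0 : ℝ) ∉ P.charpoly.roots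

/-- Number of complex eigenvalues (with algebraic multiplicity) of a real matrix
with strictly positive real part. -/
noncomputable def posReCount {m : Type*} [Fintype m] [DecidableEq m]
    (A : Matrix m m ℝ) : ℕ :=
  Multiset.countP (fun μ : ℂ => 0 < μ.re) (A.map Complex.ofReal).charpoly.roots

/-- Number of complex eigenvalues (with algebraic multiplicity) of a real matrix
with strictly negative real part. -/
noncomputable def negReCount {m : Type*} [Fintype m] [DecidableEq m]
    (A : Matrix m m ℝ) : ℕ :=
  Multiset.countP (fun μ : ℂ => μ.re < 0) (A.map Complex.ofReal).charpoly.roots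

/-- The quadratic form `xᵀ P x`. -/
def quadForm {m : Type*} [Fintype m] (P : Matrix m m ℝ) (x : m → ℝ) : ℝ :=
  x ⬝ᵥ P.mulVec x

/-- Euclidean norm on `m → ℝ`. -/
noncomputable def enorm {m : Type*} [Fintype m] (x : m → ℝ) : ℝ :=
  Real.sqrt (x ⬝ᵥ x)

/-- `J` is the Jacobian of `f`. -/
def IsJacobianOf {n : ℕ} (J : (Fin n → ℝ) → Matrix (Fin n) (Fin n) ℝ)
    (f : (Fin n → ℝ) → (Fin n → ℝ)) : Prop :=
  ∀ x, HasFDerivAt f (LinearMap.toContinuousLinearMap ((J x).mulVecLin)) x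

/-- the cone K⁺ = {x : xᵀPx ≥ 0} is backward invariant and strictly
contracted by the backward linear flow exp(−At). -/
theorem cone_Kplus_backward_invariant {n : ℕ}
    (A P : Matrix (Fin n) (Fin n) ℝ) (p : ℕ) (lam eps : ℝ)
    (hlam : 0 ≤ lam) (heps : 0 < eps)
    (hPsymm : P.IsSymm) (hPinertia : hasInertia P p)
    (hLMI : matLE (Aᵀ * P + P * A)
      (-((2 * lam) • P) - eps • (1 : Matrix (Fin n) (Fin n) ℝ))) :
    (∀ t : ℝ, 0 ≤ t → ∀ x : Fin n → ℝ, 0 ≤ quadForm P x →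
      0 ≤ quadForm P ((NormedSpace.exp (-(t • A))).mulVec x)) ∧
    (∀ t : ℝ, 0 < t → ∀ x : Fin n → ℝ, x ≠ 0 → 0 ≤ quadForm P x →
      0 < quadForm P ((NormedSpace.exp (-(t • A))).mulVec x)) := by
  classical
  letI : SeminormedRing (Matrix (Fin n) (Fin n) ℝ) := Matrix.linftyOpSemiNormedRing
  letI : NormedRing (Matrix (Fin n) (Fin n) ℝ) := Matrix.linftyOpNormedRing
  letI : NormedAlgebra ℝ (Matrix (Fin n) (Fin n) ℝ) := Matrix.linftyOpNormedAlgebra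
  -- derivative of the matrix flow
  have hEderiv : ∀ t : ℝ, HasDerivAt (fun u : ℝ => NormedSpace.exp (-(u • A)))
      (-(A * NormedSpace.exp (-(t • A)))) t := by
    intro t
    have h := hasDerivAt_exp_smul_const' (𝕂 := ℝ) (-A) t
    simp only [smul_neg] at h
    simp only [neg_mul] at h
    exact h
  -- key quadratic inequality from the LMI
  have key : ∀ v : Fin n → ℝ,
      2 * lam * (v ⬝ᵥ P.mulVec v) + eps * (v ⬝ᵥ v)
        ≤ -((A.mulVec v) ⬝ᵥ P.mulVec v) - v ⬝ᵥ P.mulVec (A.mulVec v) := by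
    intro v
    have h0 := hLMI.dotProduct_mulVec_nonneg v
    have e1 : v ⬝ᵥ (Aᵀ * P).mulVec v = (A.mulVec v) ⬝ᵥ P.mulVec v := by
      rw [← Matrix.mulVec_mulVec, Matrix.dotProduct_mulVec, Matrix.vecMul_transpose]
    have e2 : v ⬝ᵥ (P * A).mulVec v = v ⬝ᵥ P.mulVec (A.mulVec v) := by
      rw [← Matrix.mulVec_mulVec]
    simp only [star_trivial, Matrix.sub_mulVec, Matrix.add_mulVec, Matrix.neg_mulVec,
      Matrix.smul_mulVec, Matrix.one_mulVec, dotProduct_sub, dotProduct_add,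
      dotProduct_neg, dotProduct_smul, smul_eq_mul] at h0
    rw [e1, e2] at h0
    linarith
  -- the quadratic form along the flow, with its derivative
  have hVderiv : ∀ (x : Fin n → ℝ) (t : ℝ),
      HasDerivAt (fun u : ℝ => quadForm P ((NormedSpace.exp (-(u • A))).mulVec x))
        ((-(A.mulVec ((NormedSpace.exp (-(t • A))).mulVec x))) ⬝ᵥ
            P.mulVec ((NormedSpace.exp (-(t • A))).mulVec x)
          + ((NormedSpace.exp (-(t • A))).mulVec x) ⬝ᵥ
            P.mulVec (-(A.mulVec ((NormedSpace.exp (-(t • A))).mulVec x)))) t := by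
    intro x t
    have hE := hEderiv t
    -- coordinatewise derivatives
    have hyc : ∀ i : Fin n, HasDerivAt
        (fun u : ℝ => (NormedSpace.exp (-(u • A))).mulVec x i)
        ((-(A * NormedSpace.exp (-(t • A)))).mulVec x i) t := by
      intro i
      let L : Matrix (Fin n) (Fin n) ℝ →ₗ[ℝ] ℝ :=
        { toFun := fun M => M.mulVec x i
          map_add' := fun M N => by simp [Matrix.add_mulVec]
          map_smul' := fun c M => by simp [Matrix.smul_mulVec] }
      exact L.toContinuousLinearMap.hasFDerivAt.comp_hasDerivAt t hE
    have hwc : ∀ i : Fin n, HasDerivAt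
        (fun u : ℝ => (P * NormedSpace.exp (-(u • A))).mulVec x i)
        ((P * -(A * NormedSpace.exp (-(t • A)))).mulVec x i) t := by
      intro i
      let L : Matrix (Fin n) (Fin n) ℝ →ₗ[ℝ] ℝ :=
        { toFun := fun M => (P * M).mulVec x i
          map_add' := fun M N => by simp [Matrix.mul_add, Matrix.add_mulVec]
          map_smul' := fun c M => by simp [Matrix.mul_smul, Matrix.smul_mulVec] }
      exact L.toContinuousLinearMap.hasFDerivAt.comp_hasDerivAt t hE
    have hsum := HasDerivAt.fun_sum (u := Finset.univ)
      (fun i (_ : i ∈ Finset.univ) => (hyc i).fun_mul (hwc i))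
    have feq : (fun u : ℝ => quadForm P ((NormedSpace.exp (-(u • A))).mulVec x))
        = fun u : ℝ => ∑ i, (NormedSpace.exp (-(u • A))).mulVec x i *
            (P * NormedSpace.exp (-(u • A))).mulVec x i := by
      funext u
      simp [quadForm, dotProduct, Matrix.mulVec_mulVec]
    rw [feq]
    refine hsum.congr_deriv ?_
    simp only [Matrix.neg_mulVec, Matrix.mulVec_neg, Matrix.mulVec_mulVec, Matrix.mul_neg,
      Matrix.mul_assoc, Pi.neg_apply, dotProduct]
    rw [← Finset.sum_add_distrib]
  -- flow vectors never vanish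
  have hflow_ne : ∀ (t : ℝ) (x : Fin n → ℝ), x ≠ 0 →
      (NormedSpace.exp (-(t • A))).mulVec x ≠ 0 := by
    intro t x hx h0
    apply hx
    have h1 : NormedSpace.exp (t • A) * NormedSpace.exp (-(t • A)) = 1 := by
      rw [← Matrix.exp_add_of_commute _ _ ((Commute.refl (t • A)).neg_right)]
      have hz : t • A + -(t • A) = 0 := by abel
      rw [hz, NormedSpace.exp_zero]
    calc x = (1 : Matrix (Fin n) (Fin n) ℝ).mulVec x := by simp
      _ = (NormedSpace.exp (t • A) * NormedSpace.exp (-(t • A))).mulVec x := by rw [h1]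
      _ = (NormedSpace.exp (t • A)).mulVec ((NormedSpace.exp (-(t • A))).mulVec x) := by
            rw [Matrix.mulVec_mulVec]
      _ = 0 := by rw [h0]; simp
  -- A Gronwall-type setup: for each x, define V and W
  have main : ∀ x : Fin n → ℝ, 0 ≤ quadForm P x →
      (∀ t : ℝ, 0 ≤ t → 0 ≤ quadForm P ((NormedSpace.exp (-(t • A))).mulVec x)) ∧
      (x ≠ 0 → ∀ t : ℝ, 0 < t →
        0 < quadForm P ((NormedSpace.exp (-(t • A))).mulVec x)) := by
    intro x hx0
    set V : ℝ → ℝ := fun u => quadForm P ((NormedSpace.exp (-(u • A))).mulVec x) with hVdef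
    set W : ℝ → ℝ := fun u => Real.exp (-(2 * lam) * u) * V u with hWdef
    set y : ℝ → (Fin n → ℝ) := fun u => (NormedSpace.exp (-(u • A))).mulVec x with hydef
    have hexp : ∀ t : ℝ, HasDerivAt (fun u : ℝ => Real.exp (-(2 * lam) * u))
        (-(2 * lam) * Real.exp (-(2 * lam) * t)) t := by
      intro t
      have h := ((hasDerivAt_id t).const_mul (-(2 * lam))).exp
      simpa [mul_comm] using h
    have hW : ∀ t : ℝ, HasDerivAt W
        (-(2 * lam) * Real.exp (-(2 * lam) * t) * V t +
          Real.exp (-(2 * lam) * t) *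
          ((-(A.mulVec (y t))) ⬝ᵥ P.mulVec (y t) + (y t) ⬝ᵥ P.mulVec (-(A.mulVec (y t))))) t :=
      fun t => (hexp t).mul (hVderiv x t)
    -- the derivative of W is bounded below
    have hbound : ∀ t : ℝ,
        Real.exp (-(2 * lam) * t) * (eps * ((y t) ⬝ᵥ (y t)))
          ≤ -(2 * lam) * Real.exp (-(2 * lam) * t) * V t +
            Real.exp (-(2 * lam) * t) *
            ((-(A.mulVec (y t))) ⬝ᵥ P.mulVec (y t) + (y t) ⬝ᵥ P.mulVec (-(A.mulVec (y t)))) := by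
      intro t
      have hk := key (y t)
      have hrw : (-(A.mulVec (y t))) ⬝ᵥ P.mulVec (y t) + (y t) ⬝ᵥ P.mulVec (-(A.mulVec (y t)))
          = -((A.mulVec (y t)) ⬝ᵥ P.mulVec (y t)) - (y t) ⬝ᵥ P.mulVec (A.mulVec (y t)) := by
        simp [Matrix.mulVec_neg, dotProduct_neg, neg_dotProduct, sub_eq_add_neg]
      have hVt : V t = (y t) ⬝ᵥ P.mulVec (y t) := rfl
      rw [hrw, hVt]
      have hePos : (0 : ℝ) < Real.exp (-(2 * lam) * t) := Real.exp_pos _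
      nlinarith [hePos, hk]
    have hWnonneg : ∀ t : ℝ, 0 ≤ -(2 * lam) * Real.exp (-(2 * lam) * t) * V t +
        Real.exp (-(2 * lam) * t) *
        ((-(A.mulVec (y t))) ⬝ᵥ P.mulVec (y t) + (y t) ⬝ᵥ P.mulVec (-(A.mulVec (y t)))) := by
      intro t
      have hyy : 0 ≤ (y t) ⬝ᵥ (y t) := Finset.sum_nonneg fun i _ => mul_self_nonneg _
      have h1 : (0:ℝ) ≤ Real.exp (-(2 * lam) * t) * (eps * ((y t) ⬝ᵥ (y t))) :=
        mul_nonneg (Real.exp_pos _).le (mul_nonneg heps.le hyy)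
      linarith [hbound t]
    have hWdiff : Differentiable ℝ W := fun t => (hW t).differentiableAt
    have hWmono : Monotone W :=
      monotone_of_deriv_nonneg hWdiff fun t => by rw [(hW t).deriv]; exact hWnonneg t
    have hW0 : W 0 = V 0 := by simp [hWdef]
    have hV0 : V 0 = quadForm P x := by
      simp only [hVdef]
      congr 1
      simp [Matrix.one_mulVec]
    constructor
    · intro t ht
      have h1 : W 0 ≤ W t := hWmono ht
      have h2 : 0 ≤ W t := by rw [hW0, hV0] at h1; linarith
      simp only [hWdef] at h2
      by_contra hcon
      push_neg at hcon
      have := mul_neg_of_pos_of_neg (Real.exp_pos (-(2 * lam) * t)) hcon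
      exact absurd h2 (by simpa using not_le.mpr this)
    · intro hxne t ht
      have hWstrict : StrictMono W := by
        apply strictMono_of_deriv_pos
        intro s
        rw [(hW s).deriv]
        have hy_ne : y s ≠ 0 := hflow_ne s x hxne
        have hyy : 0 < (y s) ⬝ᵥ (y s) := by
          rcases lt_or_eq_of_le (Finset.sum_nonneg fun i (_ : i ∈ Finset.univ) =>
            mul_self_nonneg (y s i)) with h | h
          · exact h
          · exact absurd (dotProduct_self_eq_zero.mp h.symm) hy_ne
        have hePos := Real.exp_pos (-(2 * lam) * s)
        have h1 : (0:ℝ) < Real.exp (-(2 * lam) * s) * (eps * ((y s) ⬝ᵥ (y s))) :=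
          mul_pos hePos (mul_pos heps hyy)
        linarith [hbound s]
      have h1 : W 0 < W t := hWstrict ht
      have h2 : 0 < W t := by rw [hW0, hV0] at h1; linarith
      simp only [hWdef] at h2
      by_contra hcon
      push_neg at hcon
      have := mul_nonpos_of_nonneg_of_nonpos (Real.exp_pos (-(2 * lam) * t)).le hcon
      exact absurd h2 (not_lt.mpr this)
  constructor
  · intro t ht x hx
    exact (main x hx).1 t ht
  · intro t ht x hxne hx
    exact (main x hx).2 hxne t ht
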